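/- For x ∈ (0,1/2) with x ≠ 1/3, define F̃(x) = −6x² + 4x − 2/3 + (2/ξ(x))·(2x log x + (1−2x) log(1−2x) + log 3). Then F̃(x) > 0 for x ∈ (1/6, 1/3), F̃(x) < 0 for x ∈ (0, 1/6) ∪ (1/3, 1/2), and F̃(1/6) = 0. -/

import Mathlib

open Real Set

/-- ξ(x) = (1/(1−3x)) log((1−2x)/x), continuously extended by ξ(1/3) = 3. -/
noncomputable def xi (x : ℝ) : ℝ :=
  if x = 1 / 3 then 3 else (1 / (1 - 3 * x)) * Real.log ((1 - 2 * x) / x)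

/-- F̃(x) = −6x² + 4x − 2/3 + (2/ξ(x))(2x log x + (1−2x) log(1−2x) + log 3). -/
noncomputable def Ftilde (x : ℝ) : ℝ :=
  -6 * x ^ 2 + 4 * x - 2 / 3 +
    (2 / xi x) * (2 * x * Real.log x + (1 - 2 * x) * Real.log (1 - 2 * x) + Real.log 3)

noncomputable def hh (u : ℝ) : ℝ := (u + 1) * Real.log u + (2 - u) * Real.log (3 - 2 * u)

noncomputable def kk (u : ℝ) : ℝ :=
  Real.log u - Real.log (3 - 2 * u) + (u + 1) / u - 2 * (2 - u) / (3 - 2 * u)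

noncomputable def qq (u : ℝ) : ℝ := 3 * (u - 1) * (3 - 4 * u) / (u ^ 2 * (3 - 2 * u) ^ 2)

lemma lin_deriv (u : ℝ) : HasDerivAt (fun y : ℝ => 3 - 2 * y) (-2) u := by
  simpa using ((hasDerivAt_id u).const_mul (2:ℝ)).const_sub (3:ℝ)

lemma hh_deriv {u : ℝ} (h1 : 0 < u) (h2 : u < 3 / 2) : HasDerivAt hh (kk u) u := by
  have h3 : (0:ℝ) < 3 - 2 * u := by linarith
  have dlog : HasDerivAt Real.log u⁻¹ u := Real.hasDerivAt_log h1.ne'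
  have dlog2 : HasDerivAt (fun y : ℝ => Real.log (3 - 2 * y)) ((3 - 2 * u)⁻¹ * (-2)) u := by
    have := (Real.hasDerivAt_log h3.ne').comp u (lin_deriv u); exact this
  have dA : HasDerivAt (fun y : ℝ => (y + 1) * Real.log y)
      (1 * Real.log u + (u + 1) * u⁻¹) u :=
    ((hasDerivAt_id u).add_const 1).mul dlog
  have dB : HasDerivAt (fun y : ℝ => (2 - y) * Real.log (3 - 2 * y))
      ((-1) * Real.log (3 - 2 * u) + (2 - u) * ((3 - 2 * u)⁻¹ * (-2))) u := by
    have dC : HasDerivAt (fun y : ℝ => 2 - y) (-1) u := by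
      simpa using (hasDerivAt_id u).const_sub (2:ℝ)
    exact dC.mul dlog2
  have := dA.add dB
  refine this.congr_deriv ?_
  unfold kk
  field_simp
  ring

lemma kk_deriv {u : ℝ} (h1 : 0 < u) (h2 : u < 3 / 2) : HasDerivAt kk (qq u) u := by
  have h3 : (0:ℝ) < 3 - 2 * u := by linarith
  have dlog : HasDerivAt Real.log u⁻¹ u := Real.hasDerivAt_log h1.ne'
  have dlog2 : HasDerivAt (fun y : ℝ => Real.log (3 - 2 * y)) ((3 - 2 * u)⁻¹ * (-2)) u := by
    have := (Real.hasDerivAt_log h3.ne').comp u (lin_deriv u); exact this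
  have dA : HasDerivAt (fun y : ℝ => (y + 1) / y)
      ((1 * u - (u + 1) * 1) / u ^ 2) u :=
    ((hasDerivAt_id u).add_const 1).div (hasDerivAt_id u) h1.ne'
  have dB : HasDerivAt (fun y : ℝ => 2 * (2 - y) / (3 - 2 * y))
      (((-2) * (3 - 2 * u) - 2 * (2 - u) * (-2)) / (3 - 2 * u) ^ 2) u := by
    have dC : HasDerivAt (fun y : ℝ => 2 * (2 - y)) (-2) u := by
      simpa using ((hasDerivAt_id u).const_sub (2:ℝ)).const_mul (2:ℝ)
    exact dC.div (lin_deriv u) h3.ne'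
  have := ((dlog.sub dlog2).add dA).sub dB
  refine this.congr_deriv ?_
  unfold qq
  generalize hv : 3 - 2 * u = v at h3 ⊢
  field_simp
  rw [← hv]
  ring

lemma hh_one : hh 1 = 0 := by norm_num [hh]

lemma kk_one : kk 1 = 0 := by norm_num [kk]

lemma hh_half : hh (1 / 2) = 0 := by
  have hl : Real.log (1 / 2) = -Real.log 2 := by
    rw [one_div, Real.log_inv]
  unfold hh
  rw [show (3:ℝ) - 2 * (1 / 2) = 2 by norm_num, hl]
  ring

lemma kk_cont : ∀ u ∈ Ioo (0:ℝ) (3/2), ContinuousAt kk u := fun u hu =>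
  (kk_deriv hu.1 hu.2).differentiableAt.continuousAt

lemma hh_cont : ∀ u ∈ Ioo (0:ℝ) (3/2), ContinuousAt hh u := fun u hu =>
  (hh_deriv hu.1 hu.2).differentiableAt.continuousAt

lemma kk_mono : StrictMonoOn kk (Icc (3/4 : ℝ) 1) := by
  apply strictMonoOn_of_deriv_pos (convex_Icc _ _)
  · intro u hu
    exact (kk_cont u ⟨by linarith [hu.1], by linarith [hu.2]⟩).continuousWithinAt
  · intro u hu
    rw [interior_Icc] at hu
    rw [(kk_deriv (by linarith [hu.1]) (by linarith [hu.2])).deriv]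
    unfold qq
    apply div_pos
    · nlinarith [hu.1, hu.2]
    · have h1 : (0:ℝ) < u := by linarith [hu.1]
      have h3 : (0:ℝ) < 3 - 2 * u := by linarith [hu.2]
      positivity

lemma kk_anti : StrictAntiOn kk (Ico (1:ℝ) (3/2)) := by
  apply strictAntiOn_of_deriv_neg (convex_Ico _ _)
  · intro u hu
    exact (kk_cont u ⟨by linarith [hu.1], hu.2⟩).continuousWithinAt
  · intro u hu
    rw [interior_Ico] at hu
    rw [(kk_deriv (by linarith [hu.1]) hu.2).deriv]
    unfold qq
    apply div_neg_of_neg_of_pos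
    · nlinarith [hu.1, hu.2]
    · have h1 : (0:ℝ) < u := by linarith [hu.1]
      have h3 : (0:ℝ) < 3 - 2 * u := by linarith [hu.2]
      positivity

lemma kk_neg_left : ∀ u ∈ Ico (3/4 : ℝ) 1, kk u < 0 := by
  intro u hu
  have := kk_mono ⟨hu.1, hu.2.le⟩ (by constructor <;> norm_num) hu.2
  rwa [kk_one] at this

lemma kk_neg_right : ∀ u ∈ Ioo (1 : ℝ) (3/2), kk u < 0 := by
  intro u hu
  have := kk_anti (by constructor <;> norm_num) ⟨hu.1.le, hu.2⟩ hu.1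
  rwa [kk_one] at this

lemma hh_anti1 : StrictAntiOn hh (Icc (3/4 : ℝ) 1) := by
  apply strictAntiOn_of_deriv_neg (convex_Icc _ _)
  · intro u hu
    exact (hh_cont u ⟨by linarith [hu.1], by linarith [hu.2]⟩).continuousWithinAt
  · intro u hu
    rw [interior_Icc] at hu
    rw [(hh_deriv (by linarith [hu.1]) (by linarith [hu.2])).deriv]
    exact kk_neg_left u ⟨hu.1.le, hu.2⟩

lemma hh_anti2 : StrictAntiOn hh (Ico (1 : ℝ) (3/2)) := by
  apply strictAntiOn_of_deriv_neg (convex_Ico _ _)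
  · intro u hu
    exact (hh_cont u ⟨by linarith [hu.1], hu.2⟩).continuousWithinAt
  · intro u hu
    rw [interior_Ico] at hu
    rw [(hh_deriv (by linarith [hu.1]) hu.2).deriv]
    exact kk_neg_right u hu

lemma hh_34_pos : 0 < hh (3/4) := by
  have := hh_anti1 (by constructor <;> norm_num) (by constructor <;> norm_num)
    (by norm_num : (3/4 : ℝ) < 1)
  rwa [hh_one] at this

lemma hh_concave : ConcaveOn ℝ (Ioc (0:ℝ) (3/4)) hh := by
  have hsub : Ioc (0:ℝ) (3/4) ⊆ Ioo (0:ℝ) (3/2) := fun u hu => ⟨hu.1, by linarith [hu.2]⟩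
  have hint : interior (Ioc (0:ℝ) (3/4)) = Ioo (0:ℝ) (3/4) := interior_Ioc
  apply concaveOn_of_deriv2_nonpos (convex_Ioc _ _)
  · exact fun u hu => (hh_cont u (hsub hu)).continuousWithinAt
  · intro u hu
    rw [hint] at hu
    exact (hh_deriv hu.1 (by linarith [hu.2])).differentiableAt.differentiableWithinAt
  · intro u hu
    rw [hint] at hu
    have heq : deriv hh =ᶠ[nhds u] kk := by
      filter_upwards [isOpen_Ioo.mem_nhds (⟨hu.1, by linarith [hu.2]⟩ :
        u ∈ Ioo (0:ℝ) (3/2))] with y hy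
      exact (hh_deriv hy.1 hy.2).deriv
    exact (((kk_deriv hu.1 (by linarith [hu.2])).differentiableAt).congr_of_eventuallyEq
      heq).differentiableWithinAt
  · intro u hu
    rw [hint] at hu
    have heq : deriv hh =ᶠ[nhds u] kk := by
      filter_upwards [isOpen_Ioo.mem_nhds (⟨hu.1, by linarith [hu.2]⟩ :
        u ∈ Ioo (0:ℝ) (3/2))] with y hy
      exact (hh_deriv hy.1 hy.2).deriv
    have : deriv^[2] hh u = deriv kk u := by
      simp only [Function.iterate_succ, Function.iterate_zero, Function.comp_apply, id_eq]
      exact heq.deriv_eq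
    rw [this, (kk_deriv hu.1 (by linarith [hu.2])).deriv]
    unfold qq
    apply div_nonpos_of_nonpos_of_nonneg
    · nlinarith [hu.1, hu.2]
    · positivity

lemma hh_pos : ∀ u ∈ Ioo (1/2 : ℝ) 1, 0 < hh u := by
  intro u hu
  rcases lt_or_ge u (3/4) with hc | hc
  · -- concavity between 1/2 and 3/4
    have ha : (0:ℝ) ≤ 3 - 4 * u := by linarith [hu.1, hc]
    have hb : (0:ℝ) < 4 * u - 2 := by linarith [hu.1]
    have := hh_concave.2 (show (1/2:ℝ) ∈ Ioc (0:ℝ) (3/4) by constructor <;> norm_num)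
      (show (3/4:ℝ) ∈ Ioc (0:ℝ) (3/4) by constructor <;> norm_num)
      ha hb.le (by ring)
    rw [smul_eq_mul, smul_eq_mul, smul_eq_mul, smul_eq_mul] at this
    rw [show (3 - 4*u) * (1/2) + (4*u - 2) * (3/4) = u by ring, hh_half] at this
    nlinarith [hh_34_pos]
  · have := hh_anti1 ⟨hc, hu.2.le⟩ (by constructor <;> norm_num) hu.2
    rwa [hh_one] at this

lemma hh_neg_lo : ∀ u ∈ Ioo (0 : ℝ) (1/2), hh u < 0 := by
  intro u hu
  have ha : (0:ℝ) < 1 / (3 - 4 * u) := by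
    apply one_div_pos.2; linarith [hu.2]
  have hb : (0:ℝ) < (2 - 4 * u) / (3 - 4 * u) := by
    apply div_pos <;> linarith [hu.2]
  have h34 : (3:ℝ) - 4 * u ≠ 0 := by linarith [hu.2]
  have hab : 1 / (3 - 4 * u) + (2 - 4 * u) / (3 - 4 * u) = 1 := by
    field_simp
    ring
  have := hh_concave.2 (show u ∈ Ioc (0:ℝ) (3/4) from ⟨hu.1, by linarith [hu.2]⟩)
    (show (3/4:ℝ) ∈ Ioc (0:ℝ) (3/4) by constructor <;> norm_num)
    ha.le hb.le hab
  rw [smul_eq_mul, smul_eq_mul, smul_eq_mul, smul_eq_mul] at this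
  have hmid : 1 / (3 - 4*u) * u + (2 - 4*u) / (3 - 4*u) * (3/4) = 1/2 := by
    field_simp
    ring
  rw [hmid, hh_half] at this
  nlinarith [hh_34_pos, ha, hb]

lemma hh_neg_hi : ∀ u ∈ Ioo (1 : ℝ) (3/2), hh u < 0 := by
  intro u hu
  have := hh_anti2 (by constructor <;> norm_num) ⟨hu.1.le, hu.2⟩ hu.1
  rwa [hh_one] at this

lemma key {x : ℝ} (hx0 : 0 < x) (hx2 : x < 1/2) (hx3 : x ≠ 1/3) :
    0 < xi x ∧ Ftilde x = 2 / (3 * xi x) * hh (3 * x) := by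
  have h2 : (0:ℝ) < 1 - 2 * x := by linarith
  have hne : (1:ℝ) - 3 * x ≠ 0 := by
    intro h; apply hx3; linarith
  have hL : Real.log ((1 - 2 * x) / x) = Real.log (1 - 2 * x) - Real.log x :=
    Real.log_div h2.ne' hx0.ne'
  have hLne : Real.log (1 - 2 * x) - Real.log x ≠ 0 := by
    intro h
    have := Real.log_injOn_pos (mem_Ioi.2 h2) (mem_Ioi.2 hx0) (by linarith)
    apply hx3; linarith
  have hxi : xi x = 1 / (1 - 3 * x) * (Real.log (1 - 2 * x) - Real.log x) := by
    rw [xi, if_neg hx3, hL]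
  have hxipos : 0 < xi x := by
    rw [hxi]
    rcases lt_or_gt_of_ne hx3 with h | h
    · have h13 : (0:ℝ) < 1 - 3 * x := by linarith
      have hlt : Real.log x < Real.log (1 - 2 * x) := Real.log_lt_log hx0 (by linarith)
      exact mul_pos (by positivity) (by linarith)
    · have h13 : 1 / (1 - 3 * x) < 0 := by
        apply one_div_neg.2; linarith
      have hlt : Real.log (1 - 2 * x) < Real.log x := Real.log_lt_log h2 (by linarith)
      exact mul_pos_of_neg_of_neg h13 (by linarith)
  refine ⟨hxipos, ?_⟩
  have e1 : Real.log (3 * x) = Real.log 3 + Real.log x :=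
    Real.log_mul (by norm_num) hx0.ne'
  have e2 : Real.log (3 - 2 * (3 * x)) = Real.log 3 + Real.log (1 - 2 * x) := by
    rw [show (3:ℝ) - 2 * (3 * x) = 3 * (1 - 2 * x) by ring,
      Real.log_mul (by norm_num) h2.ne']
  rw [Ftilde, hh, e1, e2, hxi]
  generalize hG : Real.log (1 - 2 * x) - Real.log x = L at hLne ⊢
  rw [show Real.log (1 - 2 * x) = L + Real.log x by linarith]
  field_simp
  ring

/-- F̃ > 0 on (1/6, 1/3), F̃ < 0 on (0, 1/6) ∪ (1/3, 1/2), and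
F̃(1/6) = 0. -/
theorem stmt_9 :
    (∀ x ∈ Ioo (1 / 6 : ℝ) (1 / 3), 0 < Ftilde x) ∧
    (∀ x ∈ Ioo (0 : ℝ) (1 / 6) ∪ Ioo (1 / 3 : ℝ) (1 / 2), Ftilde x < 0) ∧
    Ftilde (1 / 6) = 0 := by
  refine ⟨?_, ?_, ?_⟩
  · intro x hx
    obtain ⟨hxi, heq⟩ := key (by linarith [hx.1]) (by linarith [hx.2]) (ne_of_lt hx.2)
    rw [heq]
    have hpos := hh_pos (3 * x) ⟨by linarith [hx.1], by linarith [hx.2]⟩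
    have : (0:ℝ) < 2 / (3 * xi x) := by positivity
    exact mul_pos this hpos
  · rintro x (hx | hx)
    · obtain ⟨hxi, heq⟩ := key hx.1 (by linarith [hx.2]) (by intro h; rw [h] at hx; norm_num at hx)
      rw [heq]
      have hneg := hh_neg_lo (3 * x) ⟨by linarith [hx.1], by linarith [hx.2]⟩
      have : (0:ℝ) < 2 / (3 * xi x) := by positivity
      exact mul_neg_of_pos_of_neg this hneg
    · obtain ⟨hxi, heq⟩ := key (by linarith [hx.1]) hx.2 (ne_of_gt hx.1)
      rw [heq]
      have hneg := hh_neg_hi (3 * x) ⟨by linarith [hx.1], by linarith [hx.2]⟩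
      have : (0:ℝ) < 2 / (3 * xi x) := by positivity
      exact mul_neg_of_pos_of_neg this hneg
  · obtain ⟨hxi, heq⟩ := key (show (0:ℝ) < 1/6 by norm_num) (by norm_num)
      (by norm_num)
    rw [heq, show (3:ℝ) * (1/6) = 1/2 by norm_num, hh_half, mul_zero]
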